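/- Let φ: ℤ_q^m → ℤ_h be a map, where h is a prime dividing q. The following are equivalent: (1) φ is a GPhA(q^m) of type 1 = (1,…,1); (2) the expansion φ': ℤ_{hq}^m → ℤ_h of φ of type 1 satisfies |Σ_{x ∈ ℤ_{hq}^m} ζ_h^{φ'(x)} ζ_{hq}^{−v·x}|² = (h²q)^m if v ∈ F and = 0 if v ∈ ℤ_{hq}^m ∖ F, where F = {v ∈ ℤ_{hq}^m : v ≡ (1,…,1) mod h}. -/

import Mathlib

open scoped BigOperators

noncomputable section

/-- `zeta k` is the complex `k`-th root of unity `exp(2π√-1/k)`. -/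
def zeta (k : ℕ) : ℂ := Complex.exp (2 * Real.pi * Complex.I / k)

/-- Periodic autocorrelation of a map `f : A → ℤ_h` at shift `w`. -/
def AC {A : Type*} [AddCommGroup A] [Fintype A] (h : ℕ) (f : A → ZMod h) (w : A) : ℂ :=
  ∑ g : A, zeta h ^ (f g - f (g + w)).val

/-- The expansion `φ' : ℤ_{hq}^m → ℤ_h` of type `1 = (1,…,1)` of `φ : ℤ_q^m → ℤ_h`:
`φ'(g) = φ(g mod q) + Σ_i ⌊g_i/q⌋ (mod h)`. -/
def expandOne (q m h : ℕ) (φ : (Fin m → ZMod q) → ZMod h)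
    (g : Fin m → ZMod (h * q)) : ZMod h :=
  φ (fun i => ((g i).val : ZMod q)) + ((∑ i, (g i).val / q : ℕ) : ZMod h)

/-- `L = {(y_1 q, …, y_m q) : 0 ≤ y_i < h} ⊆ ℤ_{hq}^m`. -/
def LOne (q m h : ℕ) : Set (Fin m → ZMod (h * q)) :=
  {g | ∀ i, q ∣ (g i).val}

/-- The "Walsh" sum `Σ_{x ∈ ℤ_{hq}^m} ζ_h^{φ'(x)} ζ_{hq}^{-v·x}`. -/
def WS (q m h : ℕ) [NeZero (h * q)] (f : (Fin m → ZMod (h * q)) → ZMod h)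
    (v : Fin m → ZMod (h * q)) : ℂ :=
  ∑ x : Fin m → ZMod (h * q),
    zeta h ^ (f x).val * zeta (h * q) ^ (-(∑ i, (v i).val * (x i).val : ℤ))

lemma zeta_ne_zero (k : ℕ) : zeta k ≠ 0 := Complex.exp_ne_zero _

lemma zeta_prim (k : ℕ) (hk : k ≠ 0) : IsPrimitiveRoot (zeta k) k :=
  Complex.isPrimitiveRoot_exp k hk

lemma zeta_pow_self (k : ℕ) (hk : k ≠ 0) : zeta k ^ (k : ℤ) = 1 := by
  simpa using (zeta_prim k hk).pow_eq_one

lemma zeta_zpow_congr (k : ℕ) (hk : k ≠ 0) {a b : ℤ} (h : (a : ZMod k) = b) :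
    zeta k ^ a = zeta k ^ b := by
  have hd : (k : ℤ) ∣ a - b := by
    have : ((a - b : ℤ) : ZMod k) = 0 := by push_cast [h]; ring
    exact (ZMod.intCast_zmod_eq_zero_iff_dvd _ _).mp this
  obtain ⟨c, hc⟩ := hd
  have ha : a = b + k * c := by omega
  rw [ha, zpow_add₀ (zeta_ne_zero k), zpow_mul, zeta_pow_self k hk, one_zpow, mul_one]

lemma zeta_abs (k : ℕ) : ‖zeta k‖ = 1 := by
  rw [zeta, Complex.norm_exp]
  norm_num [Complex.div_re]

lemma conj_zeta_zpow (k : ℕ) (a : ℤ) :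
    (starRingEnd ℂ) (zeta k ^ a) = zeta k ^ (-a) := by
  have h1 : (starRingEnd ℂ) (zeta k) = (zeta k)⁻¹ := by
    rw [Complex.inv_def, Complex.normSq_eq_norm_sq, zeta_abs]
    simp
  rw [map_zpow₀, h1, inv_zpow, ← zpow_neg]

lemma sum_range_zeta (k : ℕ) (hk : k ≠ 0) (a : ℤ) :
    ∑ j ∈ Finset.range k, zeta k ^ (a * j) = if (a : ZMod k) = 0 then (k : ℂ) else 0 := by
  by_cases h : (a : ZMod k) = 0
  · simp only [h, if_true]
    have : ∀ j ∈ Finset.range k, zeta k ^ (a * j) = 1 := by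
      intro j _
      have : ((a * j : ℤ) : ZMod k) = ((0 : ℤ) : ZMod k) := by push_cast [h]; ring
      rw [zeta_zpow_congr k hk this, zpow_zero]
    rw [Finset.sum_congr rfl this]
    simp
  · simp only [h, if_false]
    have hx1 : zeta k ^ a ≠ 1 := by
      intro hcon
      exact h ((ZMod.intCast_zmod_eq_zero_iff_dvd _ _).mpr
        (((zeta_prim k hk).zpow_eq_one_iff_dvd a).mp hcon))
    have hre : ∀ j ∈ Finset.range k, zeta k ^ (a * j) = (zeta k ^ a) ^ j := by
      intro j _
      rw [← zpow_natCast (zeta k ^ a) j, ← zpow_mul]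
    rw [Finset.sum_congr rfl hre, geom_sum_eq hx1]
    have : (zeta k ^ a) ^ k = 1 := by
      rw [← zpow_natCast (zeta k ^ a) k, ← zpow_mul, mul_comm, zpow_mul, zeta_pow_self k hk,
        one_zpow]
    rw [this, sub_self, zero_div]

lemma zeta_mul_left (A B : ℕ) (hA : A ≠ 0) (hB : B ≠ 0) (a : ℤ) :
    zeta (A * B) ^ ((A : ℤ) * a) = zeta B ^ a := by
  have h1 : zeta (A * B) ^ (A : ℤ) = zeta B := by
    rw [zpow_natCast, zeta, zeta, ← Complex.exp_nat_mul]
    congr 1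
    have hA' : (A : ℂ) ≠ 0 := Nat.cast_ne_zero.mpr hA
    push_cast
    rw [show (A:ℂ) * (B:ℂ) = (B:ℂ) * (A:ℂ) from mul_comm _ _, ← div_div,
      mul_div_cancel₀ _ hA']
  rw [zpow_mul, h1]

lemma sum_zmod_val (k : ℕ) [NeZero k] (f : ℕ → ℂ) :
    ∑ x : ZMod k, f x.val = ∑ j ∈ Finset.range k, f j := by
  rcases k with _ | n
  · exact absurd rfl (NeZero.ne 0)
  · exact Fin.sum_univ_eq_sum_range (fun j => f j) (n + 1)

lemma sum_range_mul_reindex (A B : ℕ) (hA : A ≠ 0) (g : ℕ → ℂ) (r : ℕ) (hr : r < A) :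
    ∑ j ∈ Finset.range (A * B), (if j % A = r then g j else 0)
      = ∑ s ∈ Finset.range B, g (A * s + r) := by
  rw [← Finset.sum_filter]
  refine (Finset.sum_nbij' (fun s => A * s + r) (fun j => j / A) ?_ ?_ ?_ ?_ ?_).symm
  · intro s hs
    simp only [Finset.mem_filter, Finset.mem_range] at hs ⊢
    refine ⟨?_, by simp [Nat.mul_add_mod, Nat.mod_eq_of_lt hr]⟩
    calc A * s + r < A * s + A := by omega
      _ = A * (s + 1) := by ring
      _ ≤ A * B := Nat.mul_le_mul_left A hs
  · intro j hj
    simp only [Finset.mem_filter, Finset.mem_range] at hj ⊢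
    exact Nat.div_lt_of_lt_mul hj.1
  · intro s hs
    simp [Nat.mul_add_div (Nat.pos_of_ne_zero hA), Nat.div_eq_of_lt hr]
  · intro j hj
    simp only [Finset.mem_filter, Finset.mem_range] at hj
    have h2 := Nat.div_add_mod j A
    show A * (j / A) + r = j
    omega
  · intro s hs
    rfl

def eC (k : ℕ) (t : ZMod k) : ℂ := zeta k ^ (t.val : ℤ)

lemma eC_intCast (k : ℕ) [NeZero k] (t : ZMod k) (a : ℤ) (h : (a : ZMod k) = t) :
    eC k t = zeta k ^ a := by
  refine (zeta_zpow_congr k (NeZero.ne k) ?_).symm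
  rw [h]
  push_cast
  simp [ZMod.natCast_val, ZMod.cast_id]

lemma eC_add (k : ℕ) [NeZero k] (s t : ZMod k) : eC k (s + t) = eC k s * eC k t := by
  rw [eC_intCast k (s + t) ((s.val : ℤ) + t.val) (by push_cast; simp [ZMod.natCast_val, ZMod.cast_id]),
    zpow_add₀ (zeta_ne_zero k)]
  rfl

lemma conj_eC (k : ℕ) [NeZero k] (t : ZMod k) :
    (starRingEnd ℂ) (eC k t) = eC k (-t) := by
  rw [eC, conj_zeta_zpow, eC_intCast k (-t) (-(t.val : ℤ))
    (by push_cast; simp [ZMod.natCast_val, ZMod.cast_id])]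

lemma sum_eC_mul (k : ℕ) [NeZero k] (a : ZMod k) :
    ∑ x : ZMod k, eC k (a * x) = if a = 0 then (k : ℂ) else 0 := by
  have h1 : ∀ x : ZMod k, eC k (a * x) = zeta k ^ ((a.val : ℤ) * x.val) := by
    intro x
    exact eC_intCast k (a * x) ((a.val : ℤ) * x.val)
      (by push_cast; simp [ZMod.natCast_val, ZMod.cast_id])
  calc ∑ x : ZMod k, eC k (a * x) = ∑ x : ZMod k, zeta k ^ ((a.val : ℤ) * x.val) := by
        simp only [h1]
    _ = ∑ j ∈ Finset.range k, zeta k ^ ((a.val : ℤ) * j) :=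
        sum_zmod_val k (fun j => zeta k ^ ((a.val : ℤ) * j))
    _ = if ((a.val : ℤ) : ZMod k) = 0 then (k : ℂ) else 0 :=
        sum_range_zeta k (NeZero.ne k) (a.val : ℤ)
    _ = if a = 0 then (k : ℂ) else 0 := by
        congr 1
        simp [ZMod.natCast_val, ZMod.cast_id]

lemma key_mod (h q a t : ℕ) (hh : h ≠ 0) (hq0 : q ≠ 0) (ha : a < q) :
    (a + q * t) % (h * q) = a + q * (t % h) := by
  have h1 : a + q * t = (a + q * (t % h)) + (h * q) * (t / h) := by
    calc a + q * t = a + q * (h * (t / h) + t % h) := by rw [Nat.div_add_mod]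
      _ = (a + q * (t % h)) + (h * q) * (t / h) := by ring
  rw [h1, Nat.add_mul_mod_self_left, Nat.mod_eq_of_lt]
  have h2 : t % h < h := Nat.mod_lt _ (Nat.pos_of_ne_zero hh)
  calc a + q * (t % h) < q + q * (t % h) := by omega
    _ = q * (t % h + 1) := by ring
    _ ≤ q * h := Nat.mul_le_mul_left q h2
    _ = h * q := mul_comm q h

lemma natCast_mod_mul (h q x : ℕ) : ((x % (h * q) : ℕ) : ZMod q) = (x : ZMod q) := by
  conv_rhs => rw [← Nat.div_add_mod x (h * q)]
  push_cast
  simp [ZMod.natCast_self]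

lemma val_add_low (h q : ℕ) [NeZero (h * q)] (g w : ZMod (h * q)) (hw : q ∣ w.val) :
    (((g + w).val : ℕ) : ZMod q) = ((g.val : ℕ) : ZMod q) := by
  rw [ZMod.val_add, natCast_mod_mul]
  push_cast
  rw [(ZMod.natCast_eq_zero_iff _ _).mpr hw, add_zero]

lemma val_add_high (h q : ℕ) [NeZero (h * q)] (hh : h ≠ 0) (hq0 : q ≠ 0)
    (g w : ZMod (h * q)) (hw : q ∣ w.val) :
    (((g + w).val / q : ℕ) : ZMod h)
      = ((g.val / q : ℕ) : ZMod h) + ((w.val / q : ℕ) : ZMod h) := by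
  obtain ⟨c, hc⟩ := hw
  have hgval : g.val = g.val % q + q * (g.val / q) := (Nat.mod_add_div _ _).symm
  have ha : g.val % q < q := Nat.mod_lt _ (Nat.pos_of_ne_zero hq0)
  have h1 : (g + w).val = g.val % q + q * ((g.val / q + c) % h) := by
    rw [ZMod.val_add, hc]
    calc (g.val + q * c) % (h * q)
        = (g.val % q + q * (g.val / q + c)) % (h * q) := by
          congr 1
          calc g.val + q * c = (g.val % q + q * (g.val / q)) + q * c := by rw [← hgval]
            _ = g.val % q + q * (g.val / q + c) := by ring
      _ = g.val % q + q * ((g.val / q + c) % h) := key_mod h q _ _ hh hq0 ha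
  have h2 : (g + w).val / q = (g.val / q + c) % h := by
    rw [h1, Nat.add_mul_div_left _ _ (Nat.pos_of_ne_zero hq0), Nat.div_eq_of_lt ha, zero_add]
  rw [h2, hc, Nat.mul_div_cancel_left _ (Nat.pos_of_ne_zero hq0)]
  conv_rhs => rw [← Nat.cast_add, ← Nat.mod_add_div (g.val / q + c) h]
  push_cast
  simp [ZMod.natCast_self]

lemma eC_sum (k : ℕ) [NeZero k] {ι : Type*} (s : Finset ι) (t : ι → ZMod k) :
    eC k (∑ i ∈ s, t i) = ∏ i ∈ s, eC k (t i) := by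
  classical
  induction s using Finset.cons_induction with
  | empty => simp [eC, ZMod.val_zero]
  | cons a s ha ih => rw [Finset.sum_cons, Finset.prod_cons, eC_add, ih]

lemma AC_eq {A : Type*} [AddCommGroup A] [Fintype A] (h : ℕ) [NeZero h]
    (f : A → ZMod h) (w : A) :
    AC h f w = ∑ g : A, eC h (f g - f (g + w)) := by
  unfold AC eC
  exact Finset.sum_congr rfl fun g _ => (zpow_natCast _ _).symm

lemma conj_AC {A : Type*} [AddCommGroup A] [Fintype A] (h : ℕ) [NeZero h]
    (f : A → ZMod h) (w : A) :
    (starRingEnd ℂ) (AC h f w) = ∑ g : A, eC h (f (g + w) - f g) := by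
  rw [AC_eq, map_sum]
  exact Finset.sum_congr rfl fun g _ => by rw [conj_eC, neg_sub]

lemma sum_eC_dot (q m h : ℕ) [NeZero (h * q)] (u : Fin m → ZMod (h * q)) :
    ∑ v : Fin m → ZMod (h * q), eC (h * q) (∑ i, v i * u i)
      = if u = 0 then ((h * q : ℕ) : ℂ) ^ m else 0 := by
  classical
  have h1 : ∀ v : Fin m → ZMod (h * q),
      eC (h * q) (∑ i, v i * u i) = ∏ i, eC (h * q) (u i * v i) := by
    intro v
    rw [eC_sum]
    exact Finset.prod_congr rfl fun i _ => congrArg (eC (h * q)) (mul_comm _ _)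
  simp only [h1]
  rw [← Fintype.prod_sum (fun i (j : ZMod (h * q)) => eC (h * q) (u i * j))]
  by_cases hu : u = 0
  · subst hu
    simp only [Pi.zero_apply, sum_eC_mul, if_pos rfl, if_true]
    simp [Finset.prod_const]
  · simp only [if_neg hu]
    obtain ⟨i, hi⟩ : ∃ i, u i ≠ 0 := by
      by_contra hcon
      push_neg at hcon
      exact hu (funext hcon)
    refine Finset.prod_eq_zero (Finset.mem_univ i) ?_
    rw [sum_eC_mul, if_neg hi]

lemma WS_eq (q m h : ℕ) [NeZero h] [NeZero (h * q)]
    (f : (Fin m → ZMod (h * q)) → ZMod h) (v : Fin m → ZMod (h * q)) :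
    WS q m h f v = ∑ x : Fin m → ZMod (h * q),
      eC h (f x) * eC (h * q) (-(∑ i, v i * x i)) := by
  unfold WS
  refine Finset.sum_congr rfl fun x _ => ?_
  have h1 : zeta h ^ (f x).val = eC h (f x) := by
    rw [eC]; exact (zpow_natCast _ _).symm
  have h2 : eC (h * q) (-(∑ i, v i * x i))
      = zeta (h * q) ^ (-(∑ i, (v i).val * (x i).val : ℤ)) := by
    refine eC_intCast (h * q) _ _ ?_
    push_cast
    simp [ZMod.natCast_val, ZMod.cast_id]
  rw [h1, h2]

lemma dot_add (q m h : ℕ) (v y w : Fin m → ZMod (h * q)) :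
    (∑ i, v i * (y + w) i) = (∑ i, v i * y i) + ∑ i, v i * w i := by
  rw [← Finset.sum_add_distrib]
  exact Finset.sum_congr rfl fun i _ => by simp [mul_add]

lemma WS_mul_conj (q m h : ℕ) [NeZero h] [NeZero (h * q)]
    (f : (Fin m → ZMod (h * q)) → ZMod h) (v : Fin m → ZMod (h * q)) :
    WS q m h f v * (starRingEnd ℂ) (WS q m h f v)
      = ∑ w : Fin m → ZMod (h * q),
          (starRingEnd ℂ) (AC h f w) * eC (h * q) (-(∑ i, v i * w i)) := by
  calc WS q m h f v * (starRingEnd ℂ) (WS q m h f v)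
      = (∑ x : Fin m → ZMod (h * q), eC h (f x) * eC (h * q) (-(∑ i, v i * x i)))
        * ∑ y : Fin m → ZMod (h * q), eC h (-(f y)) * eC (h * q) (∑ i, v i * y i) := by
        rw [WS_eq, map_sum]
        congr 1
        refine Finset.sum_congr rfl fun y _ => ?_
        rw [map_mul, conj_eC, conj_eC, neg_neg]
    _ = ∑ y : Fin m → ZMod (h * q), ∑ x : Fin m → ZMod (h * q),
          (eC h (f x) * eC (h * q) (-(∑ i, v i * x i)))
            * (eC h (-(f y)) * eC (h * q) (∑ i, v i * y i)) := by
        rw [Finset.sum_mul_sum]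
        exact Finset.sum_comm
    _ = ∑ y : Fin m → ZMod (h * q), ∑ w : Fin m → ZMod (h * q),
          (eC h (f (y + w)) * eC (h * q) (-(∑ i, v i * (y + w) i)))
            * (eC h (-(f y)) * eC (h * q) (∑ i, v i * y i)) := by
        refine Finset.sum_congr rfl fun y _ => ?_
        exact (Fintype.sum_equiv (Equiv.addLeft y)
          (fun w => (eC h (f (y + w)) * eC (h * q) (-(∑ i, v i * (y + w) i)))
            * (eC h (-(f y)) * eC (h * q) (∑ i, v i * y i)))
          (fun x => (eC h (f x) * eC (h * q) (-(∑ i, v i * x i)))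
            * (eC h (-(f y)) * eC (h * q) (∑ i, v i * y i)))
          (fun w => rfl)).symm
    _ = ∑ y : Fin m → ZMod (h * q), ∑ w : Fin m → ZMod (h * q),
          eC h (f (y + w) - f y) * eC (h * q) (-(∑ i, v i * w i)) := by
        refine Finset.sum_congr rfl fun y _ => Finset.sum_congr rfl fun w _ => ?_
        rw [show ∀ a b c d : ℂ, a * b * (c * d) = (a * c) * (b * d) from fun a b c d => by ring]
        rw [← eC_add, ← eC_add, ← sub_eq_add_neg]
        congr 2
        rw [dot_add]
        ring
    _ = ∑ w : Fin m → ZMod (h * q),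
          (∑ y : Fin m → ZMod (h * q), eC h (f (y + w) - f y))
            * eC (h * q) (-(∑ i, v i * w i)) := by
        rw [Finset.sum_comm]
        exact Finset.sum_congr rfl fun w _ => (Finset.sum_mul _ _ _).symm
    _ = ∑ w : Fin m → ZMod (h * q),
          (starRingEnd ℂ) (AC h f w) * eC (h * q) (-(∑ i, v i * w i)) := by
        exact Finset.sum_congr rfl fun w _ => by rw [conj_AC]

lemma expand_shift (q m h : ℕ) [NeZero q] [NeZero h] [NeZero (h * q)]
    (φ : (Fin m → ZMod q) → ZMod h) (w : Fin m → ZMod (h * q))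
    (hw : ∀ i, q ∣ (w i).val) (g : Fin m → ZMod (h * q)) :
    expandOne q m h φ (g + w)
      = expandOne q m h φ g + ((∑ i, (w i).val / q : ℕ) : ZMod h) := by
  unfold expandOne
  have harg : (fun i => (((g + w) i).val : ZMod q)) = fun i => ((g i).val : ZMod q) :=
    funext fun i => val_add_low h q (g i) (w i) (hw i)
  have hsum : ((∑ i, ((g + w) i).val / q : ℕ) : ZMod h)
      = ((∑ i, (g i).val / q : ℕ) : ZMod h) + ((∑ i, (w i).val / q : ℕ) : ZMod h) := by
    push_cast
    rw [← Finset.sum_add_distrib]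
    exact Finset.sum_congr rfl fun i _ =>
      val_add_high h q (NeZero.ne h) (NeZero.ne q) (g i) (w i) (hw i)
  rw [harg, hsum, add_assoc]

lemma AC_on_L (q m h : ℕ) [NeZero q] [NeZero h] [NeZero (h * q)]
    (φ : (Fin m → ZMod q) → ZMod h) (w : Fin m → ZMod (h * q))
    (hw : ∀ i, q ∣ (w i).val) :
    AC h (expandOne q m h φ) w
      = ((h * q : ℕ) : ℂ) ^ m * eC h (-((∑ i, (w i).val / q : ℕ) : ZMod h)) := by
  rw [AC_eq]
  have h1 : ∀ g : Fin m → ZMod (h * q),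
      eC h (expandOne q m h φ g - expandOne q m h φ (g + w))
        = eC h (-((∑ i, (w i).val / q : ℕ) : ZMod h)) := by
    intro g
    rw [expand_shift q m h φ w hw g]
    congr 1
    ring
  rw [Finset.sum_congr rfl fun g _ => h1 g, Finset.sum_const]
  simp [Fintype.card_fun, ZMod.card, mul_comm]

lemma zeta_hq_pow_q (h q : ℕ) (hh : h ≠ 0) (hq0 : q ≠ 0) (a : ℤ) :
    zeta (h * q) ^ ((q : ℤ) * a) = zeta h ^ a := by
  rw [mul_comm h q]
  exact zeta_mul_left q h hq0 hh a

lemma zeta_hq_pow_h (h q : ℕ) (hh : h ≠ 0) (hq0 : q ≠ 0) (a : ℤ) :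
    zeta (h * q) ^ ((h : ℤ) * a) = zeta q ^ a :=
  zeta_mul_left h q hh hq0 a

lemma sum_range_dvd_reindex (A B : ℕ) (hA : A ≠ 0) (g : ℕ → ℂ) :
    ∑ j ∈ Finset.range (B * A), (if A ∣ j then g j else 0)
      = ∑ s ∈ Finset.range B, g (A * s) := by
  rw [mul_comm B A]
  have h2 := sum_range_mul_reindex A B hA g 0 (Nat.pos_of_ne_zero hA)
  simp only [Nat.dvd_iff_mod_eq_zero]
  simpa using h2

lemma forward_normSq (q m h : ℕ) [NeZero q] [NeZero h] [NeZero (h * q)]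
    (φ : (Fin m → ZMod q) → ZMod h)
    (hAC : ∀ w : Fin m → ZMod (h * q), ¬(∀ i, q ∣ (w i).val) →
      AC h (expandOne q m h φ) w = 0)
    (v : Fin m → ZMod (h * q)) :
    WS q m h (expandOne q m h φ) v
        * (starRingEnd ℂ) (WS q m h (expandOne q m h φ) v)
      = if (∀ i, (((v i).val : ℕ) : ZMod h) = 1) then ((h ^ 2 * q : ℕ) : ℂ) ^ m else 0 := by
  classical
  set f := expandOne q m h φ with hf
  set B : Fin m → ZMod (h * q) → ℂ := fun i t =>
    if q ∣ t.val then
      ((h * q : ℕ) : ℂ) * zeta h ^ ((((1 : ℤ) - (v i).val)) * ((t.val / q : ℕ) : ℤ)) else 0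
    with hB
  have claim1 : ∀ w : Fin m → ZMod (h * q),
      (starRingEnd ℂ) (AC h f w) * eC (h * q) (-(∑ i, v i * w i)) = ∏ i, B i (w i) := by
    intro w
    by_cases hwL : ∀ i, q ∣ (w i).val
    · rw [AC_on_L q m h φ w hwL, map_mul, conj_eC, neg_neg]
      have hconst : (starRingEnd ℂ) (((h * q : ℕ) : ℂ) ^ m) = ((h * q : ℕ) : ℂ) ^ m := by
        simp
      rw [hconst]
      have hS : eC h ((∑ i, (w i).val / q : ℕ) : ZMod h)
          = ∏ i, eC h ((((w i).val / q : ℕ) : ZMod h)) := by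
        rw [← eC_sum]
        congr 1
        push_cast
        rfl
      have hD : eC (h * q) (-(∑ i, v i * w i)) = ∏ i, eC (h * q) (-(v i * w i)) := by
        rw [← eC_sum]
        congr 1
        rw [Finset.sum_neg_distrib]
      rw [hS, hD,
        show ((h * q : ℕ) : ℂ) ^ m = ∏ _i : Fin m, ((h * q : ℕ) : ℂ) by
          simp [Finset.prod_const],
        ← Finset.prod_mul_distrib, ← Finset.prod_mul_distrib]
      refine Finset.prod_congr rfl fun i _ => ?_
      obtain ⟨c, hc⟩ := hwL i
      have hcdiv : (w i).val / q = c := by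
        rw [hc]; exact Nat.mul_div_cancel_left c (Nat.pos_of_ne_zero (NeZero.ne q))
      have e1 : eC h ((((w i).val / q : ℕ) : ZMod h)) = zeta h ^ (((w i).val / q : ℕ) : ℤ) := by
        refine eC_intCast h _ _ ?_
        exact Int.cast_natCast _
      have e2 : eC (h * q) (-(v i * w i))
          = zeta h ^ (-(((v i).val : ℤ) * ((w i).val / q : ℕ))) := by
        have e2a : eC (h * q) (-(v i * w i))
            = zeta (h * q) ^ (-(((v i).val : ℤ) * ((w i).val : ℤ))) := by
          refine eC_intCast (h * q) _ _ ?_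
          push_cast
          simp [ZMod.natCast_val, ZMod.cast_id]
        have e2b : (-(((v i).val : ℤ) * ((w i).val : ℤ)))
            = (q : ℤ) * (-(((v i).val : ℤ) * c)) := by
          rw [hc]; push_cast; ring
        rw [e2a, e2b, zeta_hq_pow_q h q (NeZero.ne h) (NeZero.ne q), hcdiv]
      rw [e1, e2, hB]
      simp only [if_pos (hwL i)]
      rw [mul_assoc, ← zpow_add₀ (zeta_ne_zero h)]
      congr 1
      push_cast
      ring
    · rw [hAC w hwL, map_zero, zero_mul]
      push_neg at hwL
      obtain ⟨i, hi⟩ := hwL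
      exact (Finset.prod_eq_zero (Finset.mem_univ i) (by rw [hB]; simp [if_neg hi])).symm
  have claim2 : ∀ i, (∑ t : ZMod (h * q), B i t)
      = if (((v i).val : ℕ) : ZMod h) = 1 then ((h * q : ℕ) : ℂ) * (h : ℂ) else 0 := by
    intro i
    have step1 : (∑ t : ZMod (h * q), B i t)
        = ∑ j ∈ Finset.range (h * q),
            (if q ∣ j then
              ((h * q : ℕ) : ℂ) * zeta h ^ ((((1 : ℤ) - (v i).val)) * ((j / q : ℕ) : ℤ))
             else 0) := by
      simp only [hB]
      exact sum_zmod_val (h * q) (fun j => if q ∣ j then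
        ((h * q : ℕ) : ℂ) * zeta h ^ ((((1 : ℤ) - (v i).val)) * ((j / q : ℕ) : ℤ)) else 0)
    rw [step1, sum_range_dvd_reindex q h (NeZero.ne q) _]
    have step2 : ∀ s ∈ Finset.range h,
        ((h * q : ℕ) : ℂ) * zeta h ^ ((((1 : ℤ) - (v i).val)) * (((q * s) / q : ℕ) : ℤ))
          = ((h * q : ℕ) : ℂ) * zeta h ^ ((((1 : ℤ) - (v i).val)) * (s : ℤ)) := by
      intro s _
      rw [Nat.mul_div_cancel_left s (Nat.pos_of_ne_zero (NeZero.ne q))]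
    rw [Finset.sum_congr rfl step2, ← Finset.mul_sum,
      sum_range_zeta h (NeZero.ne h) ((1 : ℤ) - (v i).val)]
    have hcond : ((((1 : ℤ) - (v i).val) : ℤ) : ZMod h) = 0
        ↔ (((v i).val : ℕ) : ZMod h) = 1 := by
      have : ((((1 : ℤ) - (v i).val) : ℤ) : ZMod h) = 1 - (((v i).val : ℕ) : ZMod h) := by
        push_cast
        ring
      rw [this, sub_eq_zero, eq_comm]
    rw [mul_ite, mul_zero]
    by_cases hone : (((v i).val : ℕ) : ZMod h) = 1
    · rw [if_pos (hcond.mpr hone), if_pos hone]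
    · rw [if_neg (fun hcon => hone (hcond.mp hcon)), if_neg hone]
  rw [WS_mul_conj q m h f v, Finset.sum_congr rfl fun w _ => claim1 w,
    ← Fintype.prod_sum B, Finset.prod_congr rfl fun i _ => claim2 i]
  by_cases hv : ∀ i, (((v i).val : ℕ) : ZMod h) = 1
  · rw [if_pos hv]
    calc (∏ i : Fin m, if (((v i).val : ℕ) : ZMod h) = 1
          then ((h * q : ℕ) : ℂ) * (h : ℂ) else 0)
        = ∏ _i : Fin m, ((h * q : ℕ) : ℂ) * (h : ℂ) :=
          Finset.prod_congr rfl fun i _ => if_pos (hv i)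
      _ = (((h * q : ℕ) : ℂ) * (h : ℂ)) ^ m := by simp [Finset.prod_const]
      _ = ((h ^ 2 * q : ℕ) : ℂ) ^ m := by push_cast; ring
  · rw [if_neg hv]
    push_neg at hv
    obtain ⟨i, hi⟩ := hv
    exact Finset.prod_eq_zero (Finset.mem_univ i) (if_neg hi)

lemma dot_sub (q m h : ℕ) (v y w : Fin m → ZMod (h * q)) :
    (∑ i, v i * (y - w) i) = (∑ i, v i * y i) - ∑ i, v i * w i := by
  rw [← Finset.sum_sub_distrib]
  exact Finset.sum_congr rfl fun i _ => by simp [mul_sub]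

lemma backward_AC (q m h : ℕ) [NeZero q] [NeZero h] [NeZero (h * q)] (hh1 : 1 < h)
    (f : (Fin m → ZMod (h * q)) → ZMod h)
    (hWS : ∀ v : Fin m → ZMod (h * q),
      WS q m h f v * (starRingEnd ℂ) (WS q m h f v)
        = if (∀ i, (((v i).val : ℕ) : ZMod h) = 1) then ((h ^ 2 * q : ℕ) : ℂ) ^ m else 0)
    (w : Fin m → ZMod (h * q)) (hw : ¬ ∀ i, q ∣ (w i).val) :
    AC h f w = 0 := by
  classical
  have sideA : ∑ v : Fin m → ZMod (h * q),
      (WS q m h f v * (starRingEnd ℂ) (WS q m h f v)) * eC (h * q) (∑ i, v i * w i)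
      = (starRingEnd ℂ) (AC h f w) * ((h * q : ℕ) : ℂ) ^ m := by
    calc ∑ v : Fin m → ZMod (h * q),
        (WS q m h f v * (starRingEnd ℂ) (WS q m h f v)) * eC (h * q) (∑ i, v i * w i)
        = ∑ v : Fin m → ZMod (h * q), ∑ w' : Fin m → ZMod (h * q),
            (starRingEnd ℂ) (AC h f w') * eC (h * q) (∑ i, v i * (w - w') i) := by
          refine Finset.sum_congr rfl fun v _ => ?_
          rw [WS_mul_conj q m h f v, Finset.sum_mul]
          refine Finset.sum_congr rfl fun w' _ => ?_
          rw [mul_assoc, ← eC_add]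
          congr 2
          rw [dot_sub]
          ring
      _ = ∑ w' : Fin m → ZMod (h * q),
            (starRingEnd ℂ) (AC h f w')
              * ∑ v : Fin m → ZMod (h * q), eC (h * q) (∑ i, v i * (w - w') i) := by
          rw [Finset.sum_comm]
          exact Finset.sum_congr rfl fun w' _ => (Finset.mul_sum _ _ _).symm
      _ = ∑ w' : Fin m → ZMod (h * q),
            (starRingEnd ℂ) (AC h f w')
              * (if w - w' = 0 then ((h * q : ℕ) : ℂ) ^ m else 0) := by
          refine Finset.sum_congr rfl fun w' _ => ?_
          rw [sum_eC_dot q m h (w - w')]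
      _ = (starRingEnd ℂ) (AC h f w) * ((h * q : ℕ) : ℂ) ^ m := by
          rw [Finset.sum_eq_single w]
          · rw [if_pos (sub_self w)]
          · intro w' _ hne
            rw [if_neg (fun hcon => hne (by
              have := sub_eq_zero.mp hcon
              exact this.symm)), mul_zero]
          · intro hcon
            exact absurd (Finset.mem_univ w) hcon
  have sideB : ∑ v : Fin m → ZMod (h * q),
      (WS q m h f v * (starRingEnd ℂ) (WS q m h f v)) * eC (h * q) (∑ i, v i * w i)
      = 0 := by
    set D : Fin m → ZMod (h * q) → ℂ := fun i t =>
      (if (((t.val : ℕ) : ZMod h) = 1) then ((h ^ 2 * q : ℕ) : ℂ) else 0)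
        * eC (h * q) (t * w i) with hD
    have hterm : ∀ v : Fin m → ZMod (h * q),
        (WS q m h f v * (starRingEnd ℂ) (WS q m h f v)) * eC (h * q) (∑ i, v i * w i)
          = ∏ i, D i (v i) := by
      intro v
      rw [hWS v, eC_sum]
      by_cases hv : ∀ i, (((v i).val : ℕ) : ZMod h) = 1
      · rw [if_pos hv]
        rw [show ∏ i, D i (v i) = ∏ i, (((h ^ 2 * q : ℕ) : ℂ) * eC (h * q) (v i * w i)) from
          Finset.prod_congr rfl fun i _ => by rw [hD]; simp only [if_pos (hv i)]]
        rw [Finset.prod_mul_distrib]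
        simp [Finset.prod_const]
      · rw [if_neg hv, zero_mul]
        push_neg at hv
        obtain ⟨i, hi⟩ := hv
        exact (Finset.prod_eq_zero (Finset.mem_univ i) (by simp only [hD]; rw [if_neg hi, zero_mul])).symm
    rw [Finset.sum_congr rfl fun v _ => hterm v, ← Fintype.prod_sum D]
    push_neg at hw
    obtain ⟨i0, hi0⟩ := hw
    refine Finset.prod_eq_zero (Finset.mem_univ i0) ?_
    have hfun : ∀ t : ZMod (h * q), D i0 t
        = (if (((t.val : ℕ) : ZMod h) = 1) then ((h ^ 2 * q : ℕ) : ℂ) else 0)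
            * zeta (h * q) ^ ((t.val : ℤ) * ((w i0).val : ℤ)) := by
      intro t
      simp only [hD]
      congr 1
      refine eC_intCast (h * q) _ _ ?_
      push_cast
      simp [ZMod.natCast_val, ZMod.cast_id]
    rw [Finset.sum_congr rfl fun t _ => hfun t]
    rw [sum_zmod_val (h * q) (fun j =>
      (if ((j : ZMod h) = 1) then ((h ^ 2 * q : ℕ) : ℂ) else 0)
        * zeta (h * q) ^ ((j : ℤ) * ((w i0).val : ℤ)))]
    have hcondmod : ∀ j : ℕ, ((j : ZMod h) = 1) ↔ j % h = 1 := by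
      intro j
      rw [show (1 : ZMod h) = ((1 : ℕ) : ZMod h) by norm_cast,
        ZMod.natCast_eq_natCast_iff]
      unfold Nat.ModEq
      rw [Nat.mod_eq_of_lt hh1]
    have hstep : ∑ j ∈ Finset.range (h * q),
        ((if ((j : ZMod h) = 1) then ((h ^ 2 * q : ℕ) : ℂ) else 0)
          * zeta (h * q) ^ ((j : ℤ) * ((w i0).val : ℤ)))
        = ∑ j ∈ Finset.range (h * q),
          (if j % h = 1 then
            ((h ^ 2 * q : ℕ) : ℂ) * zeta (h * q) ^ ((j : ℤ) * ((w i0).val : ℤ)) else 0) := by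
      refine Finset.sum_congr rfl fun j _ => ?_
      rw [ite_mul, zero_mul]
      congr 1
      rw [hcondmod j]
    rw [hstep, sum_range_mul_reindex h q (by omega) _ 1 hh1]
    have hsimp : ∀ s ∈ Finset.range q,
        ((h ^ 2 * q : ℕ) : ℂ) * zeta (h * q) ^ (((h * s + 1 : ℕ) : ℤ) * ((w i0).val : ℤ))
          = ((h ^ 2 * q : ℕ) : ℂ) * zeta (h * q) ^ (((w i0).val : ℤ))
            * zeta q ^ (((w i0).val : ℤ) * (s : ℤ)) := by
      intro s _
      have hexp : (((h * s + 1 : ℕ) : ℤ) * ((w i0).val : ℤ))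
          = ((w i0).val : ℤ) + (h : ℤ) * (((w i0).val : ℤ) * s) := by
        push_cast
        ring
      rw [hexp, zpow_add₀ (zeta_ne_zero _), ← zeta_hq_pow_h h q (by omega) (NeZero.ne q)]
      ring
    rw [Finset.sum_congr rfl hsimp, ← Finset.mul_sum,
      sum_range_zeta q (NeZero.ne q) ((w i0).val : ℤ)]
    have hcnd : (((w i0).val : ℤ) : ZMod q) ≠ 0 := by
      intro hcon
      rw [Int.cast_natCast] at hcon
      exact hi0 ((ZMod.natCast_eq_zero_iff _ _).mp hcon)
    rw [if_neg hcnd, mul_zero]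
  rw [sideA] at sideB
  have hne : ((h * q : ℕ) : ℂ) ^ m ≠ 0 := by
    apply pow_ne_zero
    exact_mod_cast Nat.cast_ne_zero.mpr (NeZero.ne (h * q))
  have h0 : (starRingEnd ℂ) (AC h f w) = 0 := by
    exact (mul_eq_zero.mp sideB).resolve_right hne
  have := congrArg (starRingEnd ℂ) h0
  simpa using this


/-- for `h` a prime dividing `q` and `φ : ℤ_q^m → ℤ_h`, the following
are equivalent: (1) `φ` is a `GPhA(q^m)` of type `1`; (2) the expansion
`φ' : ℤ_{hq}^m → ℤ_h` of `φ` of type `1` is a generalized plateaued function: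
`|Σ_x ζ_h^{φ'(x)} ζ_{hq}^{-v·x}|² = (h²q)^m` if `v ∈ F` and `= 0` otherwise,
where `F = {v : v ≡ (1,…,1) (mod h)}`. -/
theorem GPhA_iff_plateaued
    (q m h : ℕ) [NeZero q] [NeZero (h * q)] [NeZero h]
    (hq : 2 ≤ q) (hp : Nat.Prime h) (hdvd : h ∣ q)
    (φ : (Fin m → ZMod q) → ZMod h) :
    (∀ g : Fin m → ZMod (h * q), g ∉ LOne q m h → AC h (expandOne q m h φ) g = 0)
      ↔ ∀ v : Fin m → ZMod (h * q),
          ((∀ i, (((v i).val : ℕ) : ZMod h) = 1) →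
            ‖WS q m h (expandOne q m h φ) v‖ ^ 2 = ((h ^ 2 * q : ℕ) : ℝ) ^ m)
          ∧ ((¬ ∀ i, (((v i).val : ℕ) : ZMod h) = 1) →
            ‖WS q m h (expandOne q m h φ) v‖ ^ 2 = 0) := by
  constructor
  · intro hAC v
    have hg : ∀ w : Fin m → ZMod (h * q), ¬(∀ i, q ∣ (w i).val) →
        AC h (expandOne q m h φ) w = 0 := fun w hw => hAC w (fun hmem => hw hmem)
    have key := forward_normSq q m h φ hg v
    constructor
    · intro hv
      rw [if_pos hv] at key
      rw [Complex.sq_norm]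
      have h1 : ((Complex.normSq (WS q m h (expandOne q m h φ) v) : ℝ) : ℂ)
          = ((h ^ 2 * q : ℕ) : ℂ) ^ m := by rw [← Complex.mul_conj]; exact key
      have h2 : ((((h ^ 2 * q : ℕ) : ℝ) ^ m : ℝ) : ℂ) = ((h ^ 2 * q : ℕ) : ℂ) ^ m := by
        push_cast; rfl
      exact Complex.ofReal_injective (h1.trans h2.symm)
    · intro hv
      rw [if_neg hv] at key
      rw [Complex.sq_norm]
      have h1 : ((Complex.normSq (WS q m h (expandOne q m h φ) v) : ℝ) : ℂ) = 0 := by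
        rw [← Complex.mul_conj]; exact key
      exact_mod_cast h1
  · intro hP w hw
    refine backward_AC q m h hp.one_lt (expandOne q m h φ) ?_ w (fun hall => hw hall)
    intro v
    rcases hP v with ⟨h1, h2⟩
    by_cases hv : ∀ i, (((v i).val : ℕ) : ZMod h) = 1
    · rw [if_pos hv, Complex.mul_conj]
      have h3 := h1 hv
      rw [Complex.sq_norm] at h3
      rw [h3]
      push_cast
      rfl
    · rw [if_neg hv, Complex.mul_conj]
      have h3 := h2 hv
      rw [Complex.sq_norm] at h3
      rw [h3]
      exact Complex.ofReal_zero
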